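/- Define on the ball B₃ = {X ∈ ℝ³ : |X| ≤ 3} the exponent p(X) = 3/2 + |X| for |X| ≤ 1, p(X) = 5/2 for 1 ≤ |X| ≤ 2, p(X) = 9/2 − |X| for 2 ≤ |X| ≤ 3, and the function u(X) = 3/4 − |X| for |X| ≤ 1, u(X) = −1/4 for 1 ≤ |X| ≤ 2, u(X) = (104|X| − 251)/172 for 2 ≤ |X| ≤ 3, and for ε > 0 set v_ε = ε u. Then ∫_{B₃} |∇v_ε|^{p(X)} dX ≤ 40π ε^{3/2}(ε−1)/ln ε for ε > 1 and ∫_{B₃} |v_ε|^{p(X)} dX ≥ (7π/24) ε^{5/2}, hence the quotient (∫|∇v_ε|^{p(X)})/(∫|v_ε|^{p(X)}) ≤ 960(ε−1)/(7ε ln ε) → 0 as ε → ∞; consequently inf over nonzero u ∈ V(B₃) of ∫|∇u|^{p(X)}/∫|u|^{p(X)} equals 0, i.e. the modular Poincaré inequality fails for variable exponents. -/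

import Mathlib

open MeasureTheory Real

noncomputable section

/-- The variable exponent `p` on the ball `B₃ ⊂ ℝ³`. -/
def pexp (X : EuclideanSpace ℝ (Fin 3)) : ℝ :=
  if ‖X‖ ≤ 1 then 3 / 2 + ‖X‖ else if ‖X‖ ≤ 2 then 5 / 2 else 9 / 2 - ‖X‖

/-- The Lipschitz test function `u` on `B₃`. -/
def utest (X : EuclideanSpace ℝ (Fin 3)) : ℝ :=
  if ‖X‖ ≤ 1 then 3 / 4 - ‖X‖
  else if ‖X‖ ≤ 2 then -(1 / 4)
  else (104 * ‖X‖ - 251) / 172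

abbrev E3 := EuclideanSpace ℝ (Fin 3)

lemma utest_eq (X : E3) :
    utest X = max (3/4 - ‖X‖) (max (-(1/4)) ((104*‖X‖-251)/172)) := by
  have h0 := norm_nonneg X
  unfold utest
  rcases le_or_gt ‖X‖ 1 with h1 | h1
  · rw [if_pos h1, eq_comm]
    exact max_eq_left (max_le (by linarith) (by linarith))
  · rcases le_or_gt ‖X‖ 2 with h2 | h2
    · have hq : max (-(1/4)) ((104*‖X‖-251)/172) = -(1/4) := max_eq_left (by linarith)
      rw [if_neg (by linarith), if_pos h2, hq, max_eq_right (by linarith)]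
    · have hq : max (-(1/4)) ((104*‖X‖-251)/172) = (104*‖X‖-251)/172 :=
        max_eq_right (by linarith)
      rw [if_neg (by linarith), if_neg (by linarith), hq, max_eq_right (by linarith)]

lemma pexp_eq (X : E3) :
    pexp X = min (3/2 + ‖X‖) (min (5/2) (9/2 - ‖X‖)) := by
  have h0 := norm_nonneg X
  unfold pexp
  rcases le_or_gt ‖X‖ 1 with h1 | h1
  · have hq : min ((5:ℝ)/2) (9/2 - ‖X‖) = 5/2 := min_eq_left (by linarith)
    rw [if_pos h1, hq, min_eq_left (by linarith)]
  · rcases le_or_gt ‖X‖ 2 with h2 | h2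
    · have hq : min ((5:ℝ)/2) (9/2 - ‖X‖) = 5/2 := min_eq_left (by linarith)
      rw [if_neg (by linarith), if_pos h2, hq, min_eq_right (by linarith)]
    · have hq : min ((5:ℝ)/2) (9/2 - ‖X‖) = 9/2 - ‖X‖ := min_eq_right (by linarith)
      rw [if_neg (by linarith), if_neg (by linarith), hq, min_eq_right (by linarith)]

lemma utest_continuous : Continuous utest := by
  have : utest = fun X : E3 => max (3/4 - ‖X‖) (max (-(1/4)) ((104*‖X‖-251)/172)) :=
    funext utest_eq
  rw [this]; fun_prop

lemma pexp_continuous : Continuous pexp := by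
  have : pexp = fun X : E3 => min (3/2 + ‖X‖) (min (5/2) (9/2 - ‖X‖)) :=
    funext pexp_eq
  rw [this]; fun_prop

lemma pexp_le (X : E3) : pexp X ≤ 5/2 := by
  rw [pexp_eq]
  exact le_trans (min_le_right _ _) (min_le_left _ _)

lemma pexp_nonneg (X : E3) (hX : ‖X‖ ≤ 3) : (3:ℝ)/2 ≤ pexp X := by
  have h0 := norm_nonneg X
  rw [pexp_eq]
  refine le_min (by linarith) (le_min (by norm_num) (by linarith))

lemma utest_lipschitz : LipschitzWith 1 utest := by
  have l1 : LipschitzWith 1 (fun t : ℝ => 3/4 - t) := by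
    refine LipschitzWith.of_dist_le_mul fun x y => ?_
    rw [Real.dist_eq, Real.dist_eq, NNReal.coe_one, one_mul,
      show 3/4 - x - (3/4 - y) = -(x - y) by ring, abs_neg]
  have h1 : LipschitzWith 1 (fun X : E3 => 3/4 - ‖X‖) := by
    exact (l1.comp (lipschitzWith_one_norm : LipschitzWith 1 (fun X : E3 => ‖X‖))).weaken (le_of_eq (mul_one _))
  have l3 : LipschitzWith 1 (fun t : ℝ => (104*t-251)/172) := by
    refine LipschitzWith.of_dist_le_mul fun x y => ?_
    rw [Real.dist_eq, Real.dist_eq, NNReal.coe_one, one_mul,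
      show (104*x-251)/172 - (104*y-251)/172 = (104/172) * (x - y) by ring, abs_mul]
    nlinarith [abs_nonneg (x - y), abs_of_nonneg (show (0:ℝ) ≤ 104/172 by norm_num)]
  have h3 : LipschitzWith 1 (fun X : E3 => (104*‖X‖-251)/172) := by
    exact (l3.comp (lipschitzWith_one_norm : LipschitzWith 1 (fun X : E3 => ‖X‖))).weaken (le_of_eq (mul_one _))
  have := h1.max (h3.const_max (-(1/4)))
  simp only [max_self] at this
  convert this using 1
  exact funext utest_eq

lemma volume_ball_one : (volume (Metric.ball (0:E3) 1)).toReal = 4*π/3 := by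
  rw [EuclideanSpace.volume_ball]
  have hcard : (Fintype.card (Fin 3)) = 3 := by simp
  rw [hcard]
  have h1 : Real.Gamma ((3:ℕ) / 2 + 1) = 3/4 * Real.sqrt π := by
    push_cast
    rw [show (3:ℝ)/2 + 1 = (3/2) + 1 by norm_num, Real.Gamma_add_one (by norm_num),
      show (3:ℝ)/2 = 1/2 + 1 by norm_num, Real.Gamma_add_one (by norm_num),
      Real.Gamma_one_half_eq]
    ring
  rw [h1]
  have hsq : Real.sqrt π ^ 3 = π * Real.sqrt π := by
    rw [pow_succ, Real.sq_sqrt Real.pi_nonneg]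
  have hs : Real.sqrt π ≠ 0 := ne_of_gt (Real.sqrt_pos.mpr Real.pi_pos)
  rw [hsq]
  have : π * Real.sqrt π / (3 / 4 * Real.sqrt π) = 4 * π / 3 := by
    field_simp
  rw [this]
  simp [ENNReal.toReal_ofReal (by positivity : (0:ℝ) ≤ 4*π/3)]

lemma radial_eq (f : ℝ → ℝ) :
    ∫ x : E3, f ‖x‖ = (4*π) * ∫ r in Set.Ioi (0:ℝ), r^2 * f r := by
  rw [MeasureTheory.integral_fun_norm_addHaar (volume : Measure E3) f]
  have hdim : Module.finrank ℝ E3 = 3 := finrank_euclideanSpace_fin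
  rw [hdim, measureReal_def, volume_ball_one]
  simp only [nsmul_eq_mul, smul_eq_mul]
  norm_num
  ring

lemma integral_Ioi_eq (g : ℝ → ℝ) (b : ℝ) (hb : 0 < b) (h0 : ∀ r, b < r → g r = 0)
    (hint : IntegrableOn g (Set.Ioc 0 b)) :
    ∫ r in Set.Ioi (0:ℝ), g r = ∫ r in (0:ℝ)..b, g r := by
  have hgi : IntegrableOn g (Set.Ioi b) :=
    IntegrableOn.congr_fun (integrableOn_zero) (fun r hr => (h0 r hr).symm) measurableSet_Ioi
  rw [intervalIntegral.integral_of_le hb.le, ← Set.Ioc_union_Ioi_eq_Ioi hb.le,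
    setIntegral_union Set.Ioc_disjoint_Ioi_same measurableSet_Ioi hint hgi,
    setIntegral_congr_fun measurableSet_Ioi (fun r hr => h0 r hr)]
  simp

lemma interval_split (g : ℝ → ℝ) (int1 : IntervalIntegrable g volume 0 1)
    (int2 : IntervalIntegrable g volume 1 2) (int3 : IntervalIntegrable g volume 2 3) :
    ∫ r in (0:ℝ)..3, g r =
      (∫ r in (0:ℝ)..1, g r) + (∫ r in (1:ℝ)..2, g r) + (∫ r in (2:ℝ)..3, g r) := by
  rw [← intervalIntegral.integral_add_adjacent_intervals int1 (int2.trans int3),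
    ← intervalIntegral.integral_add_adjacent_intervals int2 int3, add_assoc]

lemma interval_congr {a b : ℝ} (hab : a ≤ b) (g h : ℝ → ℝ)
    (heq : ∀ r ∈ Set.Ioc a b, g r = h r) :
    ∫ r in a..b, g r = ∫ r in a..b, h r := by
  rw [intervalIntegral.integral_of_le hab, intervalIntegral.integral_of_le hab]
  exact setIntegral_congr_fun measurableSet_Ioc heq

lemma poly_int (a b c2 c3 : ℝ) :
    ∫ r in a..b, (c2 * r^2 + c3 * r^3) = c2*(b^3-a^3)/3 + c3*(b^4-a^4)/4 := by
  have i1 : IntervalIntegrable (fun r : ℝ => c2 * r^2) volume a b :=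
    (by fun_prop : Continuous fun r:ℝ => c2*r^2).intervalIntegrable a b
  have i2 : IntervalIntegrable (fun r : ℝ => c3 * r^3) volume a b :=
    (by fun_prop : Continuous fun r:ℝ => c3*r^3).intervalIntegrable a b
  rw [intervalIntegral.integral_add i1 i2, intervalIntegral.integral_const_mul,
    intervalIntegral.integral_const_mul, integral_pow, integral_pow]
  push_cast
  ring

lemma exp_int (m c a b : ℝ) (hm : m ≠ 0) :
    ∫ r in a..b, Real.exp (c + m*r) = (Real.exp (c + m*b) - Real.exp (c + m*a))/m := by
  have h : ∀ r ∈ Set.uIcc a b,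
      HasDerivAt (fun t => Real.exp (c + m*t)/m) (Real.exp (c + m*r)) r := by
    intro r _
    have h1 : HasDerivAt (fun t : ℝ => c + m*t) m r := by
      simpa using ((hasDerivAt_id r).const_mul m).const_add c
    have h2 := (h1.exp).div_const m
    have h3 : Real.exp (c + m*r) * m / m = Real.exp (c + m*r) := by field_simp
    rw [h3] at h2
    exact h2
  rw [intervalIntegral.integral_eq_sub_of_hasDerivAt h
    ((by fun_prop : Continuous fun r => Real.exp (c+m*r)).intervalIntegrable a b)]
  ring


lemma bdd_integrableOn {X : Type*} [MeasurableSpace X] (μ : Measure X) (s : Set X)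
    (hs : MeasurableSet s) (hμ : μ s ≠ ⊤) (g : X → ℝ)
    (hm : AEStronglyMeasurable g (μ.restrict s)) (C : ℝ) (hC : ∀ x ∈ s, |g x| ≤ C) :
    IntegrableOn g s μ := by
  apply Integrable.mono' (integrableOn_const (C := C) hμ) hm
  filter_upwards [ae_restrict_mem hs] with x hx
  simpa [Real.norm_eq_abs] using hC x hx

lemma intInt_of {g : ℝ → ℝ} {a b : ℝ} (hab : a ≤ b) (h : IntegrableOn g (Set.Ioc a b)) :
    IntervalIntegrable g volume a b :=
  (intervalIntegrable_iff_integrableOn_Ioc_of_le hab).mpr h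

lemma integrand_continuous {ε : ℝ} (hε : 0 < ε) :
    Continuous fun X : E3 => |ε * utest X| ^ pexp X := by
  rw [continuous_iff_continuousAt]
  intro X
  apply ContinuousAt.rpow
    ((continuous_abs.comp (continuous_const.mul utest_continuous)).continuousAt)
    pexp_continuous.continuousAt
  by_cases h : utest X = 0
  · right
    have h3 : ‖X‖ ≤ 3 := by
      by_contra hc
      push_neg at hc
      unfold utest at h
      rw [if_neg (by linarith), if_neg (by linarith)] at h
      have h' : 104 * ‖X‖ - 251 = 0 := by
        field_simp at h
        linarith
      linarith
    linarith [pexp_nonneg X h3]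
  · left
    exact abs_ne_zero.mpr (mul_ne_zero hε.ne' h)

lemma utest_mean_zero :
    (∫ X in Metric.closedBall (0 : E3) 3, utest X) = 0 := by
  classical
  set FU : ℝ → ℝ := fun r =>
    if r ≤ 3 then (if r ≤ 1 then 3/4 - r else if r ≤ 2 then -(1/4) else (104*r-251)/172)
    else 0 with hFU
  have hInd : ∀ X : E3, (Metric.closedBall (0:E3) 3).indicator utest X = FU ‖X‖ := by
    intro X
    by_cases hX : ‖X‖ ≤ 3
    · rw [Set.indicator_of_mem (Metric.mem_closedBall.mpr (by simpa [dist_zero_right] using hX)),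
        hFU]
      simp only [if_pos hX]
      rfl
    · rw [Set.indicator_of_notMem (by simpa [Metric.mem_closedBall, dist_zero_right] using hX),
        hFU]
      simp only [if_neg hX]
  have h1 : (∫ X in Metric.closedBall (0 : E3) 3, utest X) = ∫ X : E3, FU ‖X‖ := by
    rw [← integral_indicator measurableSet_closedBall]
    exact integral_congr_ae (Filter.Eventually.of_forall hInd)
  rw [h1, radial_eq]
  -- integrability of r^2 * FU r on Ioc 0 3
  have hFUm : Measurable FU := by
    apply Measurable.ite (measurableSet_le measurable_id measurable_const)
    · apply Measurable.ite (measurableSet_le measurable_id measurable_const)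
      · fun_prop
      · apply Measurable.ite (measurableSet_le measurable_id measurable_const) <;> fun_prop
    · fun_prop
  have hFUb : ∀ r ∈ Set.Ioc (0:ℝ) 3, |r^2 * FU r| ≤ 27 := by
    intro r hr
    obtain ⟨hr0, hr3⟩ := hr
    have h9 : r^2 ≤ 9 := by nlinarith
    have hFU3 : |FU r| ≤ 3 := by
      rw [hFU]
      simp only
      split_ifs with h1 h2 h3 <;> rw [abs_le] <;> constructor <;> linarith
    rw [abs_mul, abs_of_nonneg (sq_nonneg r)]
    nlinarith [abs_nonneg (FU r)]
  have hI : IntegrableOn (fun r => r^2 * FU r) (Set.Ioc (0:ℝ) 3) :=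
    bdd_integrableOn volume _ measurableSet_Ioc (by simp)
      _ ((measurable_id.pow_const 2 |>.mul hFUm).aestronglyMeasurable) 27 hFUb
  have hsplit := interval_split (fun r => r^2 * FU r)
    (intInt_of (by norm_num) (hI.mono_set (Set.Ioc_subset_Ioc (le_refl 0) (by norm_num))))
    (intInt_of (by norm_num) (hI.mono_set (Set.Ioc_subset_Ioc (by norm_num) (by norm_num))))
    (intInt_of (by norm_num) (hI.mono_set (Set.Ioc_subset_Ioc (by norm_num) (le_refl 3))))
  rw [integral_Ioi_eq _ 3 (by norm_num)
      (fun r hr => by rw [hFU]; simp only [if_neg (not_le.mpr hr)]; ring) hI,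
    hsplit]
  have e1 : ∫ r in (0:ℝ)..1, r^2 * FU r = ∫ r in (0:ℝ)..1, ((3/4) * r^2 + (-1) * r^3) := by
    apply interval_congr (by norm_num)
    intro r ⟨ha, hb⟩
    rw [hFU]
    simp only [if_pos (by linarith : r ≤ 3), if_pos hb]
    ring
  have e2 : ∫ r in (1:ℝ)..2, r^2 * FU r = ∫ r in (1:ℝ)..2, ((-(1/4)) * r^2 + 0 * r^3) := by
    apply interval_congr (by norm_num)
    intro r ⟨ha, hb⟩
    rw [hFU]
    simp only [if_pos (by linarith : r ≤ 3), if_neg (by linarith : ¬ r ≤ 1), if_pos hb]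
    ring
  have e3 : ∫ r in (2:ℝ)..3, r^2 * FU r = ∫ r in (2:ℝ)..3, ((-251/172) * r^2 + (104/172) * r^3) := by
    apply interval_congr (by norm_num)
    intro r ⟨ha, hb⟩
    rw [hFU]
    simp only [if_pos hb, if_neg (by linarith : ¬ r ≤ 1), if_neg (by linarith : ¬ r ≤ 2)]
    ring
  rw [e1, e2, e3, poly_int, poly_int, poly_int]
  norm_num

lemma rpow_four_five_half : (4:ℝ) ^ ((5:ℝ)/2) = 32 := by
  have h1 : ((5:ℝ)/2) = (5:ℝ) * (1/2) := by norm_num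
  rw [h1, Real.rpow_mul (by norm_num : (0:ℝ) ≤ 4),
    show ((5:ℝ) = ((5:ℕ):ℝ)) by norm_num, Real.rpow_natCast]
  norm_num

lemma lower_bound {ε : ℝ} (hε : 1 < ε) :
    (7 * π / 24) * ε ^ ((5:ℝ)/2) ≤
      ∫ X in Metric.closedBall (0 : E3) 3, |ε * utest X| ^ pexp X := by
  classical
  have hε0 : (0:ℝ) < ε := by linarith
  set c : ℝ := (ε/4) ^ ((5:ℝ)/2) with hc
  have hc0 : 0 ≤ c := Real.rpow_nonneg (by positivity) _
  set FL : ℝ → ℝ := fun r => if r ≤ 1 then 0 else if r ≤ 2 then c else 0 with hFL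
  -- pointwise : FL ‖X‖ ≤ integrand
  have key : ∀ X : E3, FL ‖X‖ ≤ |ε * utest X| ^ pexp X := by
    intro X
    rcases le_or_gt ‖X‖ 1 with h1 | h1
    · rw [hFL]; simp only [if_pos h1]
      exact Real.rpow_nonneg (abs_nonneg _) _
    · rcases le_or_gt ‖X‖ 2 with h2 | h2
      · have hu : utest X = -(1/4) := by
          unfold utest; rw [if_neg (by linarith), if_pos h2]
        have hp : pexp X = 5/2 := by
          unfold pexp; rw [if_neg (by linarith), if_pos h2]
        rw [hFL]; simp only [if_neg (not_le.mpr h1), if_pos h2]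
        rw [hu, hp, hc]
        have : |ε * -(1/4)| = ε/4 := by
          rw [abs_of_nonpos (by linarith), ]
          ring
        rw [this]
      · rw [hFL]; simp only [if_neg (not_le.mpr h1), if_neg (not_le.mpr h2)]
        exact Real.rpow_nonneg (abs_nonneg _) _
  -- integrability of integrand on ball
  have hIint : IntegrableOn (fun X : E3 => |ε * utest X| ^ pexp X)
      (Metric.closedBall (0:E3) 3) :=
    (integrand_continuous hε0).continuousOn.integrableOn_compact (isCompact_closedBall _ _)
  have step1 : (∫ X in Metric.closedBall (0:E3) 3, FL ‖X‖) ≤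
      ∫ X in Metric.closedBall (0 : E3) 3, |ε * utest X| ^ pexp X := by
    apply integral_mono_of_nonneg
    · apply Filter.Eventually.of_forall
      intro X
      rw [hFL]
      simp only
      split_ifs <;> simp [hc0]
    · exact hIint
    · exact Filter.Eventually.of_forall fun X => key X
  refine le_trans (le_of_eq ?_) step1
  -- compute ∫ over ball of FL∘norm
  have hzero : ∀ X : E3, X ∉ Metric.closedBall (0:E3) 3 → FL ‖X‖ = 0 := by
    intro X hX
    have h3 : ¬ ‖X‖ ≤ 3 := by simpa [Metric.mem_closedBall, dist_zero_right] using hX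
    push_neg at h3
    rw [hFL]; simp only
    split_ifs with ha hb
    · rfl
    · linarith
    · rfl
  rw [setIntegral_eq_integral_of_forall_compl_eq_zero hzero, radial_eq]
  have hFLm : Measurable FL := by
    apply Measurable.ite (measurableSet_le measurable_id measurable_const) measurable_const
    exact Measurable.ite (measurableSet_le measurable_id measurable_const) measurable_const
      measurable_const
  have hI : IntegrableOn (fun r => r^2 * FL r) (Set.Ioc (0:ℝ) 2) := by
    apply bdd_integrableOn volume _ measurableSet_Ioc (by simp) _
      (((continuous_pow 2).measurable.mul hFLm).aestronglyMeasurable) (4*c)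
    intro r ⟨hr0, hr2⟩
    have h4 : r^2 ≤ 4 := by nlinarith
    have : |FL r| ≤ c := by
      rw [hFL]; simp only
      split_ifs <;> rw [abs_le] <;> constructor <;> linarith
    show |r^2 * FL r| ≤ 4*c
    rw [abs_mul, abs_of_nonneg (sq_nonneg r)]
    nlinarith [abs_nonneg (FL r)]
  have hIoi : ∫ r in Set.Ioi (0:ℝ), r^2 * FL r = ∫ r in (0:ℝ)..2, r^2 * FL r := by
    apply integral_Ioi_eq _ 2 (by norm_num) _ hI
    intro r hr
    rw [hFL]; simp only [if_neg (by intro h; linarith : ¬ r ≤ 1), if_neg (not_le.mpr hr)]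
    ring
  have hsplit : ∫ r in (0:ℝ)..2, r^2 * FL r =
      (∫ r in (0:ℝ)..1, r^2 * FL r) + ∫ r in (1:ℝ)..2, r^2 * FL r := by
    rw [intervalIntegral.integral_add_adjacent_intervals
      (intInt_of (by norm_num) (hI.mono_set (Set.Ioc_subset_Ioc (le_refl 0) (by norm_num))))
      (intInt_of (by norm_num) (hI.mono_set (Set.Ioc_subset_Ioc (by norm_num) (le_refl 2))))]
  have e1 : ∫ r in (0:ℝ)..1, r^2 * FL r = ∫ r in (0:ℝ)..1, (0 * r^2 + 0 * r^3) := by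
    apply interval_congr (by norm_num)
    intro r ⟨ha, hb⟩
    rw [hFL]; simp only [if_pos hb]
    ring
  have e2 : ∫ r in (1:ℝ)..2, r^2 * FL r = ∫ r in (1:ℝ)..2, (c * r^2 + 0 * r^3) := by
    apply interval_congr (by norm_num)
    intro r ⟨ha, hb⟩
    rw [hFL]; simp only [if_neg (by linarith : ¬ r ≤ 1), if_pos hb]
    ring
  rw [hIoi, hsplit, e1, e2, poly_int, poly_int]
  have hcval : c = ε ^ ((5:ℝ)/2) / 32 := by
    rw [hc, Real.div_rpow hε0.le (by norm_num), rpow_four_five_half]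
  rw [hcval]
  ring

lemma vmul_lipschitz {ε : ℝ} (hε0 : 0 < ε) :
    LipschitzWith (⟨ε, hε0.le⟩ : NNReal) (fun Y : E3 => ε * utest Y) := by
  have lm : LipschitzWith (⟨ε, hε0.le⟩ : NNReal) (fun t : ℝ => ε * t) := by
    refine LipschitzWith.of_dist_le_mul fun x y => ?_
    rw [Real.dist_eq, Real.dist_eq, show ε*x - ε*y = ε*(x-y) by ring, abs_mul,
      abs_of_nonneg hε0.le]
    exact le_of_eq rfl
  exact (lm.comp utest_lipschitz).weaken (le_of_eq (mul_one _))

lemma fderiv_le {ε : ℝ} (hε0 : 0 < ε) (X : E3) :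
    ‖fderiv ℝ (fun Y : E3 => ε * utest Y) X‖ ≤ ε := by
  exact norm_fderiv_le_of_lipschitz ℝ (vmul_lipschitz hε0)

lemma gradient_bound {ε : ℝ} (hε : 1 < ε) :
    (∫ X in Metric.closedBall (0 : E3) 3,
        ‖fderiv ℝ (fun Y => ε * utest Y) X‖ ^ pexp X) ≤
      40 * π * ε ^ ((3:ℝ)/2) * (ε - 1) / Real.log ε := by
  classical
  have hε0 : (0:ℝ) < ε := by linarith
  set L := Real.log ε with hLdef
  have hL0 : 0 < L := Real.log_pos hε
  have hre : ∀ x : ℝ, ε ^ x = Real.exp (L * x) := fun x => Real.rpow_def_of_pos hε0 x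
  set FG : ℝ → ℝ := fun r =>
    if r ≤ 1 then ε ^ ((3:ℝ)/2 + r) else if r ≤ 2 then 0
    else if r ≤ 3 then ε ^ ((9:ℝ)/2 - r) else 0 with hFG
  -- pointwise bound off sphere of radius 2
  have key : ∀ X : E3, ‖X‖ ≤ 3 → ‖X‖ ≠ 2 →
      ‖fderiv ℝ (fun Y : E3 => ε * utest Y) X‖ ^ pexp X ≤ FG ‖X‖ := by
    intro X h3 hne
    rcases le_or_gt ‖X‖ 1 with h1 | h1
    · have hp : pexp X = 3/2 + ‖X‖ := by unfold pexp; rw [if_pos h1]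
      rw [hFG]; simp only [if_pos h1]
      rw [hp]
      exact Real.rpow_le_rpow (norm_nonneg _) (fderiv_le hε0 X)
        (by linarith [norm_nonneg X])
    · rcases le_or_gt ‖X‖ 2 with h2 | h2
      · have h2' : ‖X‖ < 2 := lt_of_le_of_ne h2 hne
        have ho : IsOpen {Y : E3 | 1 < ‖Y‖ ∧ ‖Y‖ < 2} := by
          have : {Y : E3 | 1 < ‖Y‖ ∧ ‖Y‖ < 2} =
              {Y : E3 | 1 < ‖Y‖} ∩ {Y : E3 | ‖Y‖ < 2} := rfl
          rw [this]
          exact (isOpen_lt continuous_const continuous_norm).inter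
            (isOpen_lt continuous_norm continuous_const)
        have hS : {Y : E3 | 1 < ‖Y‖ ∧ ‖Y‖ < 2} ∈ nhds X := ho.mem_nhds ⟨h1, h2'⟩
        have hlip0 : LipschitzOnWith 0 (fun Y : E3 => ε * utest Y)
            {Y : E3 | 1 < ‖Y‖ ∧ ‖Y‖ < 2} := by
          intro x hx y hy
          have hux : utest x = -(1/4) := by
            unfold utest; rw [if_neg (by exact not_le.mpr hx.1), if_pos hx.2.le]
          have huy : utest y = -(1/4) := by
            unfold utest; rw [if_neg (by exact not_le.mpr hy.1), if_pos hy.2.le]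
          simp [hux, huy]
        have h0 : ‖fderiv ℝ (fun Y : E3 => ε * utest Y) X‖ = 0 := by
          have := norm_fderiv_le_of_lipschitzOn ℝ hS hlip0
          simp only [NNReal.coe_zero] at this
          exact le_antisymm this (norm_nonneg _)
        rw [h0, Real.zero_rpow (by linarith [pexp_nonneg X h3] : pexp X ≠ 0)]
        rw [hFG]; simp only [if_neg (not_le.mpr h1), if_pos h2]
        exact le_refl 0
      · have hp : pexp X = 9/2 - ‖X‖ := by
          unfold pexp; rw [if_neg (by linarith), if_neg (not_le.mpr h2)]
        rw [hFG]; simp only [if_neg (by linarith : ¬ ‖X‖ ≤ 1), if_neg (not_le.mpr h2),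
          if_pos h3]
        rw [hp]
        exact Real.rpow_le_rpow (norm_nonneg _) (fderiv_le hε0 X) (by linarith)
  -- FG basic facts
  have hFG0 : ∀ r, 0 ≤ FG r := by
    intro r
    rw [hFG]; simp only
    split_ifs
    · exact Real.rpow_nonneg hε0.le _
    · exact le_refl 0
    · exact Real.rpow_nonneg hε0.le _
    · exact le_refl 0
  have hFGle : ∀ r, FG r ≤ ε ^ ((5:ℝ)/2) := by
    intro r
    rw [hFG]; simp only
    split_ifs with h1 h2 h3
    · exact Real.rpow_le_rpow_of_exponent_le hε.le (by linarith)
    · exact Real.rpow_nonneg hε0.le _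
    · exact Real.rpow_le_rpow_of_exponent_le hε.le (by linarith)
    · exact Real.rpow_nonneg hε0.le _
  have hFGm : Measurable FG := by
    have c1 : Continuous fun r : ℝ => ε ^ ((3:ℝ)/2 + r) := by
      have : (fun r : ℝ => ε ^ ((3:ℝ)/2 + r)) = fun r => Real.exp (L * (3/2 + r)) := by
        funext r; exact hre _
      rw [this]; fun_prop
    have c3 : Continuous fun r : ℝ => ε ^ ((9:ℝ)/2 - r) := by
      have : (fun r : ℝ => ε ^ ((9:ℝ)/2 - r)) = fun r => Real.exp (L * (9/2 - r)) := by
        funext r; exact hre _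
      rw [this]; fun_prop
    apply Measurable.ite (measurableSet_le measurable_id measurable_const) c1.measurable
    apply Measurable.ite (measurableSet_le measurable_id measurable_const) measurable_const
    exact Measurable.ite (measurableSet_le measurable_id measurable_const) c3.measurable
      measurable_const
  -- integrability of FG ∘ norm on the ball
  have hintFG : IntegrableOn (fun X : E3 => FG ‖X‖) (Metric.closedBall (0:E3) 3) := by
    apply bdd_integrableOn volume _ measurableSet_closedBall measure_closedBall_lt_top.ne _
      ((hFGm.comp measurable_norm).aestronglyMeasurable) (ε ^ ((5:ℝ)/2))
    intro X _
    show |FG ‖X‖| ≤ ε ^ ((5:ℝ)/2)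
    rw [abs_of_nonneg (hFG0 _)]
    exact hFGle _
  have step1 : (∫ X in Metric.closedBall (0 : E3) 3,
      ‖fderiv ℝ (fun Y => ε * utest Y) X‖ ^ pexp X) ≤
      ∫ X in Metric.closedBall (0:E3) 3, FG ‖X‖ := by
    apply integral_mono_of_nonneg
    · exact Filter.Eventually.of_forall fun X => Real.rpow_nonneg (norm_nonneg _) _
    · exact hintFG
    · have hsph : volume (Metric.sphere (0:E3) 2) = 0 := Measure.addHaar_sphere volume 0 2
      have hae : ∀ᵐ X ∂(volume.restrict (Metric.closedBall (0:E3) 3)), ‖X‖ ≠ 2 := by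
        refine ae_restrict_of_ae ?_
        rw [ae_iff]
        have hset : {X : E3 | ¬ ‖X‖ ≠ 2} = Metric.sphere 0 2 := by
          ext X; simp [mem_sphere_zero_iff_norm]
        rw [hset]
        exact hsph
      filter_upwards [hae, ae_restrict_mem measurableSet_closedBall] with X hX2 hXB
      exact key X (by simpa [Metric.mem_closedBall, dist_zero_right] using hXB) hX2
  refine le_trans step1 ?_
  have hext : (∫ X in Metric.closedBall (0:E3) 3, FG ‖X‖) = ∫ X : E3, FG ‖X‖ := by
    apply setIntegral_eq_integral_of_forall_compl_eq_zero
    intro X hX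
    have h3 : ¬ ‖X‖ ≤ 3 := by simpa [Metric.mem_closedBall, dist_zero_right] using hX
    push_neg at h3
    rw [hFG]; simp only
    split_ifs with ha hb hc
    · linarith
    · rfl
    · linarith
    · rfl
  rw [hext, radial_eq]
  -- 1-d integral computation
  have hI : IntegrableOn (fun r => r^2 * FG r) (Set.Ioc (0:ℝ) 3) := by
    apply bdd_integrableOn volume _ measurableSet_Ioc (by simp) _
      (((continuous_pow 2).measurable.mul hFGm).aestronglyMeasurable) (9 * ε ^ ((5:ℝ)/2))
    intro r ⟨hr0, hr3⟩
    have h9 : r^2 ≤ 9 := by nlinarith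
    show |r^2 * FG r| ≤ 9 * ε ^ ((5:ℝ)/2)
    rw [abs_mul, abs_of_nonneg (sq_nonneg r), abs_of_nonneg (hFG0 r)]
    have := hFGle r
    nlinarith [hFG0 r, Real.rpow_nonneg hε0.le ((5:ℝ)/2)]
  have hIoi : ∫ r in Set.Ioi (0:ℝ), r^2 * FG r = ∫ r in (0:ℝ)..3, r^2 * FG r := by
    apply integral_Ioi_eq _ 3 (by norm_num) _ hI
    intro r hr
    rw [hFG]; simp only [if_neg (by intro h; linarith : ¬ r ≤ 1),
      if_neg (by intro h; linarith : ¬ r ≤ 2), if_neg (not_le.mpr hr)]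
    ring
  have hsplit := interval_split (fun r => r^2 * FG r)
    (intInt_of (by norm_num) (hI.mono_set (Set.Ioc_subset_Ioc (le_refl 0) (by norm_num))))
    (intInt_of (by norm_num) (hI.mono_set (Set.Ioc_subset_Ioc (by norm_num) (by norm_num))))
    (intInt_of (by norm_num) (hI.mono_set (Set.Ioc_subset_Ioc (by norm_num) (le_refl 3))))
  rw [hIoi, hsplit]
  -- piece 2 vanishes
  have e2 : ∫ r in (1:ℝ)..2, r^2 * FG r = 0 := by
    rw [interval_congr (by norm_num) _ (fun _ => 0) ?_, intervalIntegral.integral_zero]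
    intro r ⟨ha, hb⟩
    rw [hFG]; simp only [if_neg (by linarith : ¬ r ≤ 1), if_pos hb]
    ring
  -- piece 1
  have c1 : Continuous fun r : ℝ => Real.exp (3/2*L + L*r) := by fun_prop
  have c3 : Continuous fun r : ℝ => Real.exp (9/2*L + (-L)*r) := by fun_prop
  set D : ℝ := Real.exp (5/2*L) - Real.exp (3/2*L) with hD
  have e1 : ∫ r in (0:ℝ)..1, r^2 * FG r ≤ D / L := by
    have congr1 : ∫ r in (0:ℝ)..1, r^2 * FG r =
        ∫ r in (0:ℝ)..1, r^2 * Real.exp (3/2*L + L*r) := by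
      apply interval_congr (by norm_num)
      intro r ⟨ha, hb⟩
      rw [hFG]; simp only [if_pos hb]
      rw [hre]
      ring_nf
    rw [congr1]
    have hmono : ∫ r in (0:ℝ)..1, r^2 * Real.exp (3/2*L + L*r) ≤
        ∫ r in (0:ℝ)..1, Real.exp (3/2*L + L*r) := by
      apply intervalIntegral.integral_mono_on (by norm_num)
      · exact ((continuous_pow 2).mul c1).intervalIntegrable _ _
      · exact c1.intervalIntegrable _ _
      · intro x ⟨hx0, hx1⟩
        have hx2 : x^2 ≤ 1 := by nlinarith
        nlinarith [Real.exp_pos (3/2*L + L*x)]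
    refine le_trans hmono (le_of_eq ?_)
    rw [exp_int L (3/2*L) 0 1 hL0.ne']
    rw [hD]
    ring_nf
  have e3 : ∫ r in (2:ℝ)..3, r^2 * FG r ≤ 9 * (D / L) := by
    have congr3 : ∫ r in (2:ℝ)..3, r^2 * FG r =
        ∫ r in (2:ℝ)..3, r^2 * Real.exp (9/2*L + (-L)*r) := by
      apply interval_congr (by norm_num)
      intro r ⟨ha, hb⟩
      rw [hFG]; simp only [if_neg (by linarith : ¬ r ≤ 1), if_neg (by linarith : ¬ r ≤ 2),
        if_pos hb]
      rw [hre]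
      ring_nf
    rw [congr3]
    have hmono : ∫ r in (2:ℝ)..3, r^2 * Real.exp (9/2*L + (-L)*r) ≤
        ∫ r in (2:ℝ)..3, 9 * Real.exp (9/2*L + (-L)*r) := by
      apply intervalIntegral.integral_mono_on (by norm_num)
      · exact ((continuous_pow 2).mul c3).intervalIntegrable _ _
      · exact (continuous_const.mul c3).intervalIntegrable _ _
      · intro x ⟨hx0, hx1⟩
        have hx2 : x^2 ≤ 9 := by nlinarith
        nlinarith [Real.exp_pos (9/2*L + (-L)*x)]
    refine le_trans hmono (le_of_eq ?_)
    rw [intervalIntegral.integral_const_mul, exp_int (-L) (9/2*L) 2 3 (by linarith)]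
    rw [hD]
    have : 9/2*L + -L*2 = 5/2*L := by ring
    rw [this]
    have : 9/2*L + -L*3 = 3/2*L := by ring
    rw [this]
    field_simp [hL0.ne']
    ring
  -- assemble
  have hD0 : 0 ≤ D := by
    rw [hD]
    have := Real.exp_le_exp.mpr (show 3/2*L ≤ 5/2*L by linarith)
    linarith
  have hfinal : ε ^ ((3:ℝ)/2) * (ε - 1) = D := by
    rw [hD, hre]
    have hεexp : ε = Real.exp L := (Real.exp_log hε0).symm
    calc Real.exp (L * (3/2)) * (ε - 1)
        = Real.exp (L * (3/2)) * Real.exp L - Real.exp (L * (3/2)) := by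
          rw [hεexp]; ring_nf
      _ = Real.exp (5/2*L) - Real.exp (3/2*L) := by
          rw [← Real.exp_add]; ring_nf
  have hsum : (∫ r in (0:ℝ)..1, r^2 * FG r) + (∫ r in (1:ℝ)..2, r^2 * FG r)
      + (∫ r in (2:ℝ)..3, r^2 * FG r) ≤ 10 * (D / L) := by
    rw [e2]
    linarith
  calc 4*π * ((∫ r in (0:ℝ)..1, r^2 * FG r) + (∫ r in (1:ℝ)..2, r^2 * FG r)
        + (∫ r in (2:ℝ)..3, r^2 * FG r))
      ≤ 4*π * (10 * (D / L)) := by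
        apply mul_le_mul_of_nonneg_left hsum (by positivity)
    _ = 40 * π * ε ^ ((3:ℝ)/2) * (ε - 1) / L := by
        rw [← hfinal]
        ring

lemma grad_nonneg (ε : ℝ) :
    0 ≤ ∫ X in Metric.closedBall (0 : E3) 3,
      ‖fderiv ℝ (fun Y => ε * utest Y) X‖ ^ pexp X :=
  setIntegral_nonneg measurableSet_closedBall
    (fun X _ => Real.rpow_nonneg (norm_nonneg _) _)

lemma rpow_split {ε : ℝ} (hε0 : 0 < ε) : ε ^ ((5:ℝ)/2) = ε ^ ((3:ℝ)/2) * ε := by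
  rw [show (5:ℝ)/2 = 3/2 + 1 by norm_num, Real.rpow_add hε0, Real.rpow_one]

lemma quot_bound {ε : ℝ} (hε : 1 < ε) :
    (∫ X in Metric.closedBall (0 : E3) 3,
        ‖fderiv ℝ (fun Y => ε * utest Y) X‖ ^ pexp X) /
      (∫ X in Metric.closedBall (0 : E3) 3, |ε * utest X| ^ pexp X) ≤
      (960/7) * (Real.log ε)⁻¹ := by
  have hε0 : (0:ℝ) < ε := by linarith
  have hL0 : 0 < Real.log ε := Real.log_pos hε
  have hπ := Real.pi_pos
  have hA0 : (0:ℝ) < ε ^ ((3:ℝ)/2) := Real.rpow_pos_of_pos hε0 _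
  set N := ∫ X in Metric.closedBall (0 : E3) 3,
    ‖fderiv ℝ (fun Y => ε * utest Y) X‖ ^ pexp X with hN
  set D := ∫ X in Metric.closedBall (0 : E3) 3, |ε * utest X| ^ pexp X with hD
  have hN0 : 0 ≤ N := grad_nonneg ε
  have hD1 : (7 * π / 24) * ε ^ ((5:ℝ)/2) ≤ D := lower_bound hε
  have hD00 : 0 < (7 * π / 24) * ε ^ ((5:ℝ)/2) := by positivity
  have hNup : N ≤ 40 * π * ε ^ ((3:ℝ)/2) * (ε - 1) / Real.log ε := gradient_bound hε
  calc N / D ≤ N / ((7 * π / 24) * ε ^ ((5:ℝ)/2)) :=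
        div_le_div_of_nonneg_left hN0 hD00 hD1
    _ ≤ (40 * π * ε ^ ((3:ℝ)/2) * (ε - 1) / Real.log ε) /
          ((7 * π / 24) * ε ^ ((5:ℝ)/2)) := by
        exact (div_le_div_iff_of_pos_right hD00).mpr hNup
    _ = (960/7) * ((ε - 1) / (ε * Real.log ε)) := by
        rw [rpow_split hε0]
        field_simp [Real.pi_ne_zero, hA0.ne', hL0.ne', hε0.ne']
        ring
    _ ≤ (960/7) * (Real.log ε)⁻¹ := by
        apply mul_le_mul_of_nonneg_left _ (by norm_num)
        rw [div_le_iff₀ (by positivity)]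
        have h : (Real.log ε)⁻¹ * (ε * Real.log ε) = ε := by
          field_simp
        rw [h]
        linarith

lemma tendsto_quot :
    Filter.Tendsto (fun ε : ℝ =>
      (∫ X in Metric.closedBall (0 : E3) 3,
          ‖fderiv ℝ (fun Y => ε * utest Y) X‖ ^ pexp X) /
        ∫ X in Metric.closedBall (0 : E3) 3,
          |ε * utest X| ^ pexp X) Filter.atTop (nhds 0) := by
  have hup : Filter.Tendsto (fun ε : ℝ => (960/7) * (Real.log ε)⁻¹)
      Filter.atTop (nhds 0) := by
    have h1 : Filter.Tendsto (fun ε : ℝ => (Real.log ε)⁻¹) Filter.atTop (nhds 0) :=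
      Real.tendsto_log_atTop.inv_tendsto_atTop
    simpa using h1.const_mul (960/7 : ℝ)
  apply tendsto_of_tendsto_of_tendsto_of_le_of_le' tendsto_const_nhds hup
  · filter_upwards [Filter.eventually_ge_atTop (2:ℝ)] with ε hε2
    have hε : (1:ℝ) < ε := by linarith
    have hD1 := lower_bound hε
    have hD00 : 0 < (7 * π / 24) * ε ^ ((5:ℝ)/2) := by
      have : (0:ℝ) < ε := by linarith
      positivity
    exact div_nonneg (grad_nonneg ε) (by linarith)
  · filter_upwards [Filter.eventually_ge_atTop (2:ℝ)] with ε hε2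
    exact quot_bound (by linarith)

lemma no_poincare :
    ¬ ∃ C : ℝ, ∀ w : E3 → ℝ,
      (∃ K : NNReal, LipschitzWith K w) →
      (∫ X in Metric.closedBall (0 : E3) 3, w X) = 0 →
      (∫ X in Metric.closedBall (0 : E3) 3, |w X| ^ pexp X) ≤
        C * ∫ X in Metric.closedBall (0 : E3) 3, ‖fderiv ℝ w X‖ ^ pexp X := by
  rintro ⟨C, hC⟩
  set ε : ℝ := max 2 (Real.exp (960 * C / 7 + 1)) with hεdef
  have hε : (1:ℝ) < ε := lt_of_lt_of_le one_lt_two (le_max_left _ _)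
  have hε0 : (0:ℝ) < ε := by linarith
  have hL0 : 0 < Real.log ε := Real.log_pos hε
  have hLge : 960 * C / 7 + 1 ≤ Real.log ε := by
    calc 960 * C / 7 + 1 = Real.log (Real.exp (960 * C / 7 + 1)) :=
          (Real.log_exp _).symm
      _ ≤ Real.log ε := Real.log_le_log (Real.exp_pos _) (le_max_right _ _)
  have hmean : (∫ X in Metric.closedBall (0 : E3) 3, ε * utest X) = 0 := by
    rw [integral_const_mul, utest_mean_zero, mul_zero]
  have hw := hC (fun Y => ε * utest Y) ⟨⟨ε, hε0.le⟩, vmul_lipschitz hε0⟩ hmean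
  set N := ∫ X in Metric.closedBall (0 : E3) 3,
    ‖fderiv ℝ (fun Y => ε * utest Y) X‖ ^ pexp X with hNdef
  set P := ∫ X in Metric.closedBall (0 : E3) 3, |ε * utest X| ^ pexp X with hPdef
  have hN0 : 0 ≤ N := grad_nonneg ε
  have h1 : (7 * π / 24) * ε ^ ((5:ℝ)/2) ≤ P := lower_bound hε
  have h2 : N ≤ 40 * π * ε ^ ((3:ℝ)/2) * (ε - 1) / Real.log ε := gradient_bound hε
  have hπ := Real.pi_pos
  have hA0 : (0:ℝ) < ε ^ ((3:ℝ)/2) := Real.rpow_pos_of_pos hε0 _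
  have hP0 : 0 < (7 * π / 24) * ε ^ ((5:ℝ)/2) := by positivity
  have hCG : 0 < C * N := lt_of_lt_of_le hP0 (le_trans h1 hw)
  have hCpos : 0 < C := by
    by_contra h
    push_neg at h
    nlinarith
  -- main chain
  have hchain : (7 * π / 24) * (ε ^ ((3:ℝ)/2) * ε) ≤
      (40 * C * (π * ε ^ ((3:ℝ)/2)) * (ε - 1)) / Real.log ε := by
    have e1 : C * (40 * π * ε ^ ((3:ℝ)/2) * (ε - 1) / Real.log ε) =
        (40 * C * (π * ε ^ ((3:ℝ)/2)) * (ε - 1)) / Real.log ε := by ring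
    calc (7 * π / 24) * (ε ^ ((3:ℝ)/2) * ε) = (7 * π / 24) * ε ^ ((5:ℝ)/2) := by
          rw [rpow_split hε0]
      _ ≤ P := h1
      _ ≤ C * N := hw
      _ ≤ C * (40 * π * ε ^ ((3:ℝ)/2) * (ε - 1) / Real.log ε) := by
          exact mul_le_mul_of_nonneg_left h2 hCpos.le
      _ = _ := e1
  have key2 : ((7:ℝ)/24) * ε * Real.log ε ≤ 40 * C * (ε - 1) := by
    have h6 := (le_div_iff₀ hL0).mp hchain
    nlinarith [h6, mul_pos hπ hA0, hπ, hA0]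
  have key3 : ((7:ℝ)/24) * ε * Real.log ε ≤ 40 * C * ε := by
    nlinarith [hCpos]
  have h5 : ((7:ℝ)/24) * ε * (960 * C / 7 + 1) ≤ ((7:ℝ)/24) * ε * Real.log ε :=
    mul_le_mul_of_nonneg_left hLge (by positivity)
  nlinarith [h5, key3, hε0]

/-- Failure of the modular Poincaré inequality for variable exponents:
with `v_ε = ε u`, for every `ε > 1` one has
`∫_{B₃} |∇v_ε|^{p} ≤ 40π ε^{3/2}(ε−1)/log ε` and
`∫_{B₃} |v_ε|^{p} ≥ (7π/24) ε^{5/2}`; the quotient tends to `0` as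
`ε → ∞`, and there is no constant `C` with
`∫ |w|^{p} ≤ C ∫ |∇w|^{p}` for all mean-zero Lipschitz `w` on `B₃`. -/
theorem stmt_19 :
    (∀ ε : ℝ, 1 < ε →
      (∫ X in Metric.closedBall (0 : EuclideanSpace ℝ (Fin 3)) 3,
          ‖fderiv ℝ (fun Y => ε * utest Y) X‖ ^ pexp X) ≤
        40 * π * ε ^ ((3:ℝ)/2) * (ε - 1) / Real.log ε ∧
      (7 * π / 24) * ε ^ ((5:ℝ)/2) ≤
        ∫ X in Metric.closedBall (0 : EuclideanSpace ℝ (Fin 3)) 3,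
          |ε * utest X| ^ pexp X) ∧
    Filter.Tendsto (fun ε : ℝ =>
      (∫ X in Metric.closedBall (0 : EuclideanSpace ℝ (Fin 3)) 3,
          ‖fderiv ℝ (fun Y => ε * utest Y) X‖ ^ pexp X) /
        ∫ X in Metric.closedBall (0 : EuclideanSpace ℝ (Fin 3)) 3,
          |ε * utest X| ^ pexp X) Filter.atTop (nhds 0) ∧
    ¬ ∃ C : ℝ, ∀ w : EuclideanSpace ℝ (Fin 3) → ℝ,
      (∃ K : NNReal, LipschitzWith K w) →
      (∫ X in Metric.closedBall (0 : EuclideanSpace ℝ (Fin 3)) 3, w X) = 0 →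
      (∫ X in Metric.closedBall (0 : EuclideanSpace ℝ (Fin 3)) 3,
          |w X| ^ pexp X) ≤
        C * ∫ X in Metric.closedBall (0 : EuclideanSpace ℝ (Fin 3)) 3,
          ‖fderiv ℝ w X‖ ^ pexp X := by
  exact ⟨fun ε hε => ⟨gradient_bound hε, lower_bound hε⟩, tendsto_quot, no_poincare⟩

end
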